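/- arXiv:1706.04410 — 3 statements merged into one kernel-verified Lean document; each statement's English description precedes it below -/
import Mathlib

section
/- Let p, q ∈ (0,1) and λ ∈ (0,1], and set δ = |p - q|. Then the Rényi divergence of order 1+λ between Bernoulli(p) and Bernoulli(q), D_{1+λ} = (1/λ)·log( p^{1+λ}/q^λ + (1-p)^{1+λ}/(1-q)^λ ), satisfies D_{1+λ} ≤ log(1 + 2δ²/min(q, 1-q)). -/
/-- Two-point Hölder inequality via weighted AM-GM. -/
lemma holder2 (w1 w2 x1 x2 y1 y2 l : ℝ) (hw1 : 0 < w1) (hw2 : 0 < w2)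
    (hx1 : 0 < x1) (hx2 : 0 < x2) (hy1 : 0 < y1) (hy2 : 0 < y2)
    (hl0 : 0 ≤ l) (hl1 : l ≤ 1) :
    w1 * (x1 ^ (1 - l) * y1 ^ l) + w2 * (x2 ^ (1 - l) * y2 ^ l)
      ≤ (w1 * x1 + w2 * x2) ^ (1 - l) * (w1 * y1 + w2 * y2) ^ l := by
  set A := w1 * x1 + w2 * x2 with hA
  set B := w1 * y1 + w2 * y2 with hB
  have hApos : 0 < A := by positivity
  have hBpos : 0 < B := by positivity
  have h1 : (x1 / A) ^ (1 - l) * (y1 / B) ^ l ≤ (1 - l) * (x1 / A) + l * (y1 / B) :=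
    Real.geom_mean_le_arith_mean2_weighted (by linarith) hl0 (by positivity) (by positivity)
      (by ring)
  have h2 : (x2 / A) ^ (1 - l) * (y2 / B) ^ l ≤ (1 - l) * (x2 / A) + l * (y2 / B) :=
    Real.geom_mean_le_arith_mean2_weighted (by linarith) hl0 (by positivity) (by positivity)
      (by ring)
  have hAne : A ^ (1 - l) ≠ 0 := by positivity
  have hBne : B ^ l ≠ 0 := by positivity
  have e1 : x1 ^ (1 - l) * y1 ^ l = A ^ (1 - l) * B ^ l * ((x1 / A) ^ (1 - l) * (y1 / B) ^ l) := by
    rw [Real.div_rpow hx1.le hApos.le, Real.div_rpow hy1.le hBpos.le]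
    field_simp
  have e2 : x2 ^ (1 - l) * y2 ^ l = A ^ (1 - l) * B ^ l * ((x2 / A) ^ (1 - l) * (y2 / B) ^ l) := by
    rw [Real.div_rpow hx2.le hApos.le, Real.div_rpow hy2.le hBpos.le]
    field_simp
  have hAB : 0 < A ^ (1 - l) * B ^ l := by positivity
  calc w1 * (x1 ^ (1 - l) * y1 ^ l) + w2 * (x2 ^ (1 - l) * y2 ^ l)
      ≤ A ^ (1 - l) * B ^ l *
          (w1 * ((1 - l) * (x1 / A) + l * (y1 / B)) + w2 * ((1 - l) * (x2 / A) + l * (y2 / B))) := by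
        rw [e1, e2]
        have := mul_le_mul_of_nonneg_left h1 hw1.le
        have := mul_le_mul_of_nonneg_left h2 hw2.le
        nlinarith [mul_le_mul_of_nonneg_left h1 hw1.le, mul_le_mul_of_nonneg_left h2 hw2.le]
    _ = A ^ (1 - l) * B ^ l := by
        have : w1 * ((1 - l) * (x1 / A) + l * (y1 / B)) + w2 * ((1 - l) * (x2 / A) + l * (y2 / B))
            = 1 := by
          field_simp
          ring
        rw [this, mul_one]

/-- Verdú–Sason bound: for Bernoulli parameters `p, q ∈ (0,1)`, `λ ∈ (0,1]`, and
`δ = |p - q|`, the Rényi divergence of order `1+λ` satisfies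
`(1/λ) log(p^{1+λ}/q^λ + (1-p)^{1+λ}/(1-q)^λ) ≤ log(1 + 2δ²/min(q,1-q))`. -/
theorem stmt_8 (p q : ℝ) (hp0 : 0 < p) (hp1 : p < 1) (hq0 : 0 < q) (hq1 : q < 1)
    (l : ℝ) (hl0 : 0 < l) (hl1 : l ≤ 1) (δ : ℝ) (hδ : δ = |p - q|) :
    (1 / l) * Real.log (p ^ (1 + l) / q ^ l + (1 - p) ^ (1 + l) / (1 - q) ^ l)
      ≤ Real.log (1 + 2 * δ ^ 2 / min q (1 - q)) := by
  have hq1' : 0 < 1 - q := by linarith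
  have hp1' : 0 < 1 - p := by linarith
  -- rewrite each term
  have key : ∀ a b : ℝ, 0 < a → 0 < b →
      a ^ (1 + l) / b ^ l = b * ((a / b) ^ (1 - l) * ((a / b) ^ (2:ℕ)) ^ l) := by
    intro a b ha hb
    have hab : 0 < a / b := by positivity
    rw [← Real.rpow_natCast (a / b) 2, ← Real.rpow_mul hab.le, ← Real.rpow_add hab]
    have h2 : (1 : ℝ) - l + (2:ℕ) * l = 1 + l := by push_cast; ring
    rw [h2, Real.div_rpow ha.le hb.le, Real.rpow_add hb, Real.rpow_one,
      mul_div_assoc', mul_div_mul_left _ _ hb.ne']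
  rw [key p q hp0 hq0, key (1-p) (1-q) hp1' hq1']
  set S1 : ℝ := p ^ (2:ℕ) / q + (1 - p) ^ (2:ℕ) / (1 - q) with hS1def
  have hS1 : S1 = 1 + (p - q) ^ 2 / (q * (1 - q)) := by
    rw [hS1def]; field_simp; ring
  have hS1pos : 0 < S1 := by rw [hS1]; positivity
  have hold := holder2 q (1 - q) (p / q) ((1 - p) / (1 - q)) ((p / q) ^ (2:ℕ))
      (((1 - p) / (1 - q)) ^ (2:ℕ)) l hq0 hq1' (by positivity) (by positivity) (by positivity)
      (by positivity) hl0.le hl1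
  have hx : q * (p / q) + (1 - q) * ((1 - p) / (1 - q)) = 1 := by field_simp; ring
  have hy : q * ((p / q) ^ (2:ℕ)) + (1 - q) * (((1 - p) / (1 - q)) ^ (2:ℕ)) = S1 := by
    rw [hS1def]; field_simp
  rw [hx, hy, Real.one_rpow, one_mul] at hold
  have hLpos : 0 < q * ((p / q) ^ (1 - l) * ((p / q) ^ (2:ℕ)) ^ l)
      + (1 - q) * (((1 - p) / (1 - q)) ^ (1 - l) * (((1 - p) / (1 - q)) ^ (2:ℕ)) ^ l) := by
    positivity
  have hlog : Real.log (q * ((p / q) ^ (1 - l) * ((p / q) ^ (2:ℕ)) ^ l)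
      + (1 - q) * (((1 - p) / (1 - q)) ^ (1 - l) * (((1 - p) / (1 - q)) ^ (2:ℕ)) ^ l))
      ≤ l * Real.log S1 := by
    calc _ ≤ Real.log (S1 ^ l) := Real.log_le_log hLpos hold
      _ = l * Real.log S1 := Real.log_rpow hS1pos l
  have step1 : (1 / l) * Real.log (q * ((p / q) ^ (1 - l) * ((p / q) ^ (2:ℕ)) ^ l)
      + (1 - q) * (((1 - p) / (1 - q)) ^ (1 - l) * (((1 - p) / (1 - q)) ^ (2:ℕ)) ^ l))
      ≤ Real.log S1 := by
    rw [div_mul_eq_mul_div, one_mul, div_le_iff₀ hl0]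
    linarith [hlog]
  refine step1.trans ?_
  apply Real.log_le_log hS1pos
  rw [hS1, hδ]
  have hmin : 0 < min q (1 - q) := lt_min hq0 hq1'
  have hmin2 : min q (1 - q) ≤ 2 * (q * (1 - q)) := by
    rcases min_le_iff.mpr (Or.inl (le_refl q)) with _
    rcases le_or_gt q (1 - q) with h | h
    · rw [min_eq_left h]; nlinarith
    · rw [min_eq_right h.le]; nlinarith
  have : (p - q) ^ 2 / (q * (1 - q)) ≤ 2 * |p - q| ^ 2 / min q (1 - q) := by
    rw [sq_abs]
    rw [div_le_div_iff₀ (by positivity) hmin]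
    nlinarith [sq_nonneg (p - q), hmin2, hmin.le]
  linarith
end

section
/- Let p, q ∈ (0,1) satisfy 1/2 - cβ ≤ q ≤ 1/2 + cβ and |p - q| ≤ 2cβ^{κ-1}, where c, β > 0 with 2cβ < 1 and κ ≥ 1. Then for any λ ∈ (0,1], p^{1+λ}/q^λ + (1-p)^{1+λ}/(1-q)^λ ≤ (1 + 8c²β^{2(κ-1)}/(1/2 - cβ))^λ ≤ exp(16c²β^{2(κ-1)}λ/(1 - 2cβ)). -/
set_option maxHeartbeats 1000000 in
/-- Bound on the Rényi integrand for the active-learning hypercube class. -/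
theorem stmt_9 (p q : ℝ) (hp0 : 0 < p) (hp1 : p < 1) (hq0 : 0 < q) (hq1 : q < 1)
    (c β κ : ℝ) (hc : 0 < c) (hβ : 0 < β) (hcβ : 2 * c * β < 1) (hκ : 1 ≤ κ)
    (hqlo : 1 / 2 - c * β ≤ q) (hqhi : q ≤ 1 / 2 + c * β)
    (hpq : |p - q| ≤ 2 * c * β ^ (κ - 1))
    (l : ℝ) (hl0 : 0 < l) (hl1 : l ≤ 1) :
    p ^ (1 + l) / q ^ l + (1 - p) ^ (1 + l) / (1 - q) ^ l
        ≤ (1 + 8 * c ^ 2 * β ^ (2 * (κ - 1)) / (1 / 2 - c * β)) ^ l ∧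
      (1 + 8 * c ^ 2 * β ^ (2 * (κ - 1)) / (1 / 2 - c * β)) ^ l
        ≤ Real.exp (16 * c ^ 2 * β ^ (2 * (κ - 1)) * l / (1 - 2 * c * β)) := by
  have hp1' : (0:ℝ) < 1 - p := by linarith
  have hq1' : (0:ℝ) < 1 - q := by linarith
  have hhalf : (0:ℝ) < 1 / 2 - c * β := by linarith
  have hβκ : (0:ℝ) < β ^ (κ - 1) := Real.rpow_pos_of_pos hβ _
  have hβ2 : β ^ (2 * (κ - 1)) = (β ^ (κ - 1)) ^ 2 := by
    rw [← Real.rpow_natCast (β ^ (κ - 1)) 2, ← Real.rpow_mul hβ.le]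
    norm_num; ring_nf
  set X : ℝ := 8 * c ^ 2 * β ^ (2 * (κ - 1)) / (1 / 2 - c * β) with hX
  have hX0 : 0 < X := by
    apply div_pos _ hhalf
    positivity
  set A : ℝ := p ^ 2 / q with hAdef
  set B : ℝ := (1 - p) ^ 2 / (1 - q) with hBdef
  have hA : 0 < A := div_pos (pow_pos hp0 2) hq0
  have hB : 0 < B := div_pos (pow_pos hp1' 2) hq1'
  have hT : 0 < A + B := by linarith
  -- Step 1: equality of each term
  have hexp : (1:ℝ) - l + 2 * l = 1 + l := by ring
  have e1 : p ^ (1 + l) / q ^ l = p ^ (1 - l) * A ^ l := by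
    rw [hAdef, Real.div_rpow (by positivity) hq0.le,
      ← Real.rpow_natCast p 2, ← Real.rpow_mul hp0.le]
    push_cast
    rw [← mul_div_assoc, ← Real.rpow_add hp0, hexp]
  have e2 : (1 - p) ^ (1 + l) / (1 - q) ^ l = (1 - p) ^ (1 - l) * B ^ l := by
    rw [hBdef, Real.div_rpow (by positivity) hq1'.le,
      ← Real.rpow_natCast (1 - p) 2, ← Real.rpow_mul hp1'.le]
    push_cast
    rw [← mul_div_assoc, ← Real.rpow_add hp1', hexp]
  -- AM-GM step
  have amgm1 : p ^ (1 - l) * (A / (A + B)) ^ l ≤ (1 - l) * p + l * (A / (A + B)) :=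
    Real.geom_mean_le_arith_mean2_weighted (by linarith) hl0.le hp0.le
      (by positivity) (by ring)
  have amgm2 : (1 - p) ^ (1 - l) * (B / (A + B)) ^ l ≤ (1 - l) * (1 - p) + l * (B / (A + B)) :=
    Real.geom_mean_le_arith_mean2_weighted (by linarith) hl0.le hp1'.le
      (by positivity) (by ring)
  have hsplitA : A ^ l = (A + B) ^ l * (A / (A + B)) ^ l := by
    rw [← Real.mul_rpow hT.le (by positivity), mul_div_cancel₀ _ (ne_of_gt hT)]
  have hsplitB : B ^ l = (A + B) ^ l * (B / (A + B)) ^ l := by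
    rw [← Real.mul_rpow hT.le (by positivity), mul_div_cancel₀ _ (ne_of_gt hT)]
  have hTl : 0 < (A + B) ^ l := Real.rpow_pos_of_pos hT _
  have step1 : p ^ (1 + l) / q ^ l + (1 - p) ^ (1 + l) / (1 - q) ^ l ≤ (A + B) ^ l := by
    rw [e1, e2, hsplitA, hsplitB]
    have h1 : p ^ (1 - l) * ((A + B) ^ l * (A / (A + B)) ^ l)
        = (A + B) ^ l * (p ^ (1 - l) * (A / (A + B)) ^ l) := by ring
    have h2 : (1 - p) ^ (1 - l) * ((A + B) ^ l * (B / (A + B)) ^ l)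
        = (A + B) ^ l * ((1 - p) ^ (1 - l) * (B / (A + B)) ^ l) := by ring
    rw [h1, h2, ← mul_add]
    calc (A + B) ^ l * (p ^ (1 - l) * (A / (A + B)) ^ l + (1 - p) ^ (1 - l) * (B / (A + B)) ^ l)
        ≤ (A + B) ^ l * (((1 - l) * p + l * (A / (A + B))) + ((1 - l) * (1 - p) + l * (B / (A + B)))) := by
          apply mul_le_mul_of_nonneg_left (by linarith) hTl.le
      _ = (A + B) ^ l := by
          have : A / (A + B) + B / (A + B) = 1 := by field_simp
          have h3 : ((1 - l) * p + l * (A / (A + B))) + ((1 - l) * (1 - p) + l * (B / (A + B)))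
              = (1 - l) + l * (A / (A + B) + B / (A + B)) := by ring
          rw [h3, this]; ring
  -- Step 2: A + B = 1 + (p-q)^2/(q(1-q))
  have hchi : A + B = 1 + (p - q) ^ 2 / (q * (1 - q)) := by
    rw [hAdef, hBdef]
    field_simp
    ring
  -- Step 3: chi-square bound
  have hnum : (p - q) ^ 2 ≤ 4 * c ^ 2 * β ^ (2 * (κ - 1)) := by
    have h := sq_le_sq' (by linarith [abs_le.mp hpq]) (abs_le.mp hpq).2
    calc (p - q) ^ 2 ≤ (2 * c * β ^ (κ - 1)) ^ 2 := h
      _ = 4 * c ^ 2 * β ^ (2 * (κ - 1)) := by rw [hβ2]; ring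
  have hden : (1 / 2 - c * β) / 2 ≤ q * (1 - q) := by
    rcases le_total q (1/2) with h | h
    · nlinarith
    · nlinarith
  have hchibound : (p - q) ^ 2 / (q * (1 - q)) ≤ X := by
    have : (p - q) ^ 2 / (q * (1 - q)) ≤ (4 * c ^ 2 * β ^ (2 * (κ - 1))) / ((1 / 2 - c * β) / 2) :=
      div_le_div₀ (by positivity) hnum (by linarith) hden
    calc (p - q) ^ 2 / (q * (1 - q)) ≤ (4 * c ^ 2 * β ^ (2 * (κ - 1))) / ((1 / 2 - c * β) / 2) := this
      _ = X := by rw [hX]; field_simp; ring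
  have hAB : A + B ≤ 1 + X := by rw [hchi]; linarith
  constructor
  · calc p ^ (1 + l) / q ^ l + (1 - p) ^ (1 + l) / (1 - q) ^ l
        ≤ (A + B) ^ l := step1
      _ ≤ (1 + X) ^ l := Real.rpow_le_rpow hT.le hAB hl0.le
  · have h1X : (0:ℝ) < 1 + X := by linarith
    rw [Real.rpow_def_of_pos h1X]
    apply Real.exp_le_exp.mpr
    have hlog : Real.log (1 + X) ≤ X := by
      have := Real.log_le_sub_one_of_pos h1X
      linarith
    have : Real.log (1 + X) * l ≤ X * l := by
      apply mul_le_mul_of_nonneg_right hlog hl0.le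
    calc Real.log (1 + X) * l ≤ X * l := this
      _ = 16 * c ^ 2 * β ^ (2 * (κ - 1)) * l / (1 - 2 * c * β) := by
          rw [hX]
          have h2 : (1:ℝ) - 2 * c * β ≠ 0 := by linarith
          have h3 : (1:ℝ) / 2 - c * β ≠ 0 := ne_of_gt hhalf
          generalize β ^ (2 * (κ - 1)) = Y
          rw [div_mul_eq_mul_div, div_eq_div_iff h3 h2]
          ring
end

section
/- Let P and Q be probability measures on a measurable space with P ≪ Q and suppose dP/dQ ≤ t Q-almost surely for some t ≥ e. Then for any λ > 0, (λ + t^{1+λ} − (1+λ)t)/(t log t + 1 − t) ≤ t^λ/(log t − 1). -/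
/-- Scalar inequality used when recovering Fano's inequality: for `t ≥ e` and `λ > 0`,
`(λ + t^{1+λ} − (1+λ)t)/(t log t + 1 − t) ≤ t^λ/(log t − 1)`, stated in the
cross-multiplied form valid also at `t = e` (both denominators are nonnegative,
with `t log t + 1 − t > 0`). -/
theorem stmt_16 (t l : ℝ) (ht : Real.exp 1 ≤ t) (hl : 0 < l) :
    (l + t ^ (1 + l) - (1 + l) * t) * (Real.log t - 1)
      ≤ t ^ l * (t * Real.log t + 1 - t) := by
  have ht0 : (0 : ℝ) < t := lt_of_lt_of_le (Real.exp_pos 1) ht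
  have ht1 : (1 : ℝ) < t := lt_of_lt_of_le (by
    have := Real.add_one_le_exp (1 : ℝ); linarith) ht
  have hL : 1 ≤ Real.log t := by
    rw [Real.le_log_iff_exp_le ht0]; simpa using ht
  have hpow : t ^ (1 + l) = t * t ^ l := by
    rw [Real.rpow_add ht0, Real.rpow_one]
  have hpos : 0 < t ^ l := Real.rpow_pos_of_pos ht0 l
  rw [hpow]
  nlinarith [mul_nonneg (by nlinarith : (0:ℝ) ≤ (1 + l) * t - l) (sub_nonneg.2 hL)]
end
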